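/- arXiv:1203.6689 — 3 statements merged into one kernel-verified Lean document; each statement's English description precedes it below -/
import Mathlib

section
/- Let $k$ be a field, $V$ a $k$-vector space of dimension $d$, and let $K/k$ be a field extension containing elements $t_1,\ldots,t_d$ that are algebraically independent over $k$. For a $k$-basis $\underline{v}=(v_1,\ldots,v_d)$ of $V$ and $a\in K$ set $b(\underline{v},a)=\sum_{i=1}^d a^{i-1} v_i \in K\otimes_k V$. Then for any $d$ bases $\underline{v}^{(1)},\ldots,\underline{v}^{(d)}$ of $V$ and any nonzero $v\in V$, the set of $d+1$ vectors $(v, b(\underline{v}^{(1)},t_1),\ldots, b(\underline{v}^{(d)},t_d))$ in $K\otimes_k V$ is in general position, i.e., every subset with at most $d$ vectors is linearly independent over $K$. -/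
open TensorProduct

section HillHelpers

variable {k K : Type*} [Field k] [Field K] [Algebra k K]

lemma hill_bc {d : ℕ} {ι : Type*} [Fintype ι] {u : ι → Fin d → k} (hu : LinearIndependent k u) :
    LinearIndependent K (fun j l => algebraMap k K (u j l)) := by
  classical
  set Mu : Matrix (Fin d) ι k := Matrix.of fun l j => u j l with hMu
  have hker : LinearMap.ker (Matrix.toLin' Mu) = ⊥ := by
    rw [LinearMap.ker_eq_bot']
    intro c hc
    funext j
    refine Fintype.linearIndependent_iff.mp hu c ?_ j
    funext l
    have h1 := congrFun hc l
    simp only [Matrix.toLin'_apply] at h1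
    simpa [Matrix.mulVec, dotProduct, Mu, mul_comm, Finset.sum_apply] using h1
  obtain ⟨g, hg⟩ := (Matrix.toLin' Mu).exists_leftInverse_of_injective hker
  set N : Matrix ι (Fin d) k := LinearMap.toMatrix' g with hN
  have hNMu : N * Mu = 1 := by
    have h2 := congrArg LinearMap.toMatrix' hg
    rwa [LinearMap.toMatrix'_comp, LinearMap.toMatrix'_toLin', LinearMap.toMatrix'_id] at h2
  rw [Fintype.linearIndependent_iff]
  intro c hc
  have hmv : (Mu.map (algebraMap k K)).mulVec c = 0 := by
    funext l
    have h1 := congrFun hc l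
    simp only [Finset.sum_apply, Pi.smul_apply, smul_eq_mul, Pi.zero_apply] at h1
    simpa [Matrix.mulVec, dotProduct, Mu, mul_comm] using h1
  have h3 : (N.map (algebraMap k K)).mulVec ((Mu.map (algebraMap k K)).mulVec c) = c := by
    rw [Matrix.mulVec_mulVec, ← Matrix.map_mul, hNMu,
      Matrix.map_one _ (map_zero _) (map_one _), Matrix.one_mulVec]
  rw [hmv, Matrix.mulVec_zero] at h3
  intro j
  exact (congrFun h3.symm j)


set_option maxHeartbeats 2000000 in
set_option synthInstance.maxHeartbeats 400000 in
lemma hill_key {d : ℕ} {σ τ : Type*} [Fintype σ] [Fintype τ]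
    (hcard : Fintype.card σ + Fintype.card τ ≤ d)
    {t : τ → K} (ht : AlgebraicIndependent k t)
    {u : σ → Fin d → k} (hu : LinearIndependent k u)
    {M : τ → Fin d → Fin d → k} (hM : ∀ i, LinearIndependent k (M i)) :
    LinearIndependent K (Sum.elim (fun j l => algebraMap k K (u j l))
      (fun i l => ∑ j : Fin d, t i ^ (j : ℕ) * algebraMap k K (M i j l))) := by
  classical
  set w : σ ⊕ τ → Fin d → K := Sum.elim (fun j l => algebraMap k K (u j l))
      (fun i l => ∑ j : Fin d, t i ^ (j : ℕ) * algebraMap k K (M i j l)) with hw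
  rw [Fintype.linearIndependent_iff]
  intro g hg
  have hA : ∀ i : τ, g (Sum.inr i) = 0 := by
    intro i
    by_contra hgi
    set x : {i' : τ // i' ≠ i} → K := fun i' => t i' with hx
    have hxind : AlgebraicIndependent k x := ht.comp _ Subtype.val_injective
    set A := MvPolynomial {i' : τ // i' ≠ i} k with hAdef
    set F := FractionRing A with hF
    have hainj : Function.Injective (MvPolynomial.aeval x : A →ₐ[k] K) :=
      algebraicIndependent_iff_injective_aeval.mp hxind
    set θ : F →ₐ[k] K := IsFractionRing.liftAlgHom hainj with hθ
    have hθa : ∀ p : A, θ (algebraMap A F p) = MvPolynomial.aeval x p := fun p =>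
      IsFractionRing.lift_algebraMap hainj p
    set w' : (σ ⊕ {i' : τ // i' ≠ i}) → Fin d → F := Sum.elim
        (fun j l => algebraMap k F (u j l))
        (fun i' l => ∑ j : Fin d, (algebraMap A F (MvPolynomial.X i')) ^ (j : ℕ)
            * algebraMap k F (M i' j l)) with hw'
    have hθw : ∀ p, (fun l => θ (w' p l)) = w (Sum.map id Subtype.val p) := by
      rintro (j | i') <;> funext l
      · simp [hw', hw, AlgHom.commutes]
      · simp only [hw', hw, Sum.elim_inr, Sum.map_inr, map_sum, map_mul, map_pow, hθa,
          MvPolynomial.aeval_X, AlgHom.commutes, hx]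
    have hcard2 : Fintype.card (σ ⊕ {i' : τ // i' ≠ i}) < d := by
      have h1 : Fintype.card {i' : τ // i' ≠ i} < Fintype.card τ := by
        apply Fintype.card_subtype_lt (x := i); simp
      simp only [Fintype.card_sum]; omega
    haveI := Set.fintypeRange w'
    have hspan : Submodule.span F (Set.range w') < ⊤ := by
      apply span_lt_top_of_card_lt_finrank
      have h2 : (Set.range w').toFinset.card ≤ Fintype.card (σ ⊕ {i' : τ // i' ≠ i}) := by
        rw [Set.toFinset_range]
        exact Finset.card_image_le.trans (by simp)
      have h3 : Module.finrank F (Fin d → F) = d := by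
        simp [Module.finrank_fintype_fun_eq_card]
      omega
    obtain ⟨φ, hφ0, hφbot⟩ := Submodule.exists_dual_map_eq_bot_of_lt_top hspan inferInstance
    set a : Fin d → F := fun l => φ (fun l' => if l = l' then 1 else 0) with ha
    set ψ : (Fin d → K) →ₗ[K] K := ∑ l : Fin d, θ (a l) • LinearMap.proj l with hψ
    have hψ_apply : ∀ c : Fin d → K, ψ c = ∑ l, θ (a l) * c l := by
      intro c
      simp [hψ, LinearMap.sum_apply, LinearMap.smul_apply, LinearMap.proj_apply, smul_eq_mul]
    have hψθ : ∀ y : Fin d → F, ψ (fun l => θ (y l)) = θ (φ y) := by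
      intro y
      rw [hψ_apply, LinearMap.pi_apply_eq_sum_univ φ y, map_sum]
      refine Finset.sum_congr rfl fun l _ => ?_
      rw [smul_eq_mul, map_mul, mul_comm]
    have hφw' : ∀ p, φ (w' p) = 0 := by
      intro p
      have hmem : w' p ∈ Submodule.span F (Set.range w') := Submodule.subset_span ⟨p, rfl⟩
      have h4 : φ (w' p) ∈ Submodule.map φ (Submodule.span F (Set.range w')) :=
        Submodule.mem_map_of_mem hmem
      rwa [hφbot, Submodule.mem_bot] at h4
    have hψw : ∀ p : σ ⊕ τ, p ≠ Sum.inr i → ψ (w p) = 0 := by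
      rintro (j | i') hp
      · have h5 := hθw (Sum.inl j)
        simp only [Sum.map_inl, id] at h5
        rw [← h5, hψθ, hφw', map_zero]
      · have hne : i' ≠ i := fun h => hp (by rw [h])
        have h5 := hθw (Sum.inr ⟨i', hne⟩)
        simp only [Sum.map_inr] at h5
        rw [← h5, hψθ, hφw', map_zero]
    have h0 : g (Sum.inr i) * ψ (w (Sum.inr i)) = 0 := by
      have h1 : ψ (∑ p, g p • w p) = 0 := by rw [hg, map_zero]
      rw [map_sum] at h1
      simp only [map_smul, smul_eq_mul] at h1
      rwa [Finset.sum_eq_single (Sum.inr i)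
        (fun p _ hp => by rw [hψw p hp, mul_zero]) (by simp)] at h1
    have hψwi : ψ (w (Sum.inr i)) = 0 := by
      rcases mul_eq_zero.mp h0 with h | h
      · exact absurd h hgi
      · exact h
    set c : Fin d → F := fun j => φ (fun l => algebraMap k F (M i j l)) with hc
    have hval : ψ (w (Sum.inr i)) = ∑ j : Fin d, t i ^ (j : ℕ) * θ (c j) := by
      rw [hψ_apply]
      have h1 : ∀ l, w (Sum.inr i) l = ∑ j : Fin d, t i ^ (j : ℕ) * algebraMap k K (M i j l) :=
        fun l => rfl
      calc ∑ l, θ (a l) * w (Sum.inr i) l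
          = ∑ l, ∑ j : Fin d, t i ^ (j : ℕ) * (θ (a l) * algebraMap k K (M i j l)) := by
            refine Finset.sum_congr rfl fun l _ => ?_
            rw [h1, Finset.mul_sum]
            exact Finset.sum_congr rfl fun j _ => by ring
        _ = ∑ j : Fin d, t i ^ (j : ℕ) * ∑ l, θ (a l) * algebraMap k K (M i j l) := by
            rw [Finset.sum_comm]
            exact Finset.sum_congr rfl fun j _ => (Finset.mul_sum _ _ _).symm
        _ = ∑ j : Fin d, t i ^ (j : ℕ) * θ (c j) := by
            refine Finset.sum_congr rfl fun j _ => ?_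
            congr 1
            calc ∑ l, θ (a l) * algebraMap k K (M i j l)
                = ψ (fun l => θ (algebraMap k F (M i j l))) := by
                  rw [hψ_apply]
                  exact Finset.sum_congr rfl fun l _ => by rw [AlgHom.commutes]
              _ = θ (c j) := hψθ _
    have hval0 : ∑ j : Fin d, t i ^ (j : ℕ) * θ (c j) = 0 := by rw [← hval, hψwi]
    have hcne : ∃ j, c j ≠ 0 := by
      by_contra hall
      push_neg at hall
      apply hφ0
      have hbc : LinearIndependent F (fun j l => algebraMap k F (M i j l)) := hill_bc (k := k) (K := F) (hM i)
      have hd : 0 < d := by omega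
      haveI : Nonempty (Fin d) := ⟨⟨0, hd⟩⟩
      have hcardd : Fintype.card (Fin d) = Module.finrank F (Fin d → F) := by
        simp [Module.finrank_fintype_fun_eq_card]
      set B := basisOfLinearIndependentOfCardEqFinrank hbc hcardd with hB
      refine Module.Basis.ext B fun j => ?_
      rw [hB, coe_basisOfLinearIndependentOfCardEqFinrank]
      simpa using hall j
    obtain ⟨j₀, hj₀⟩ := hcne
    obtain ⟨b, hb⟩ := IsLocalization.exist_integer_multiples_of_finite (nonZeroDivisors A) c
    have hb' : ∀ j, ∃ rr : A, algebraMap A F rr = (b : A) • c j := fun j => hb j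
    choose r hr using hb'
    set y : Option {i' : τ // i' ≠ i} → K := fun o => t (o.elim i Subtype.val) with hy
    have hyinj : Function.Injective (fun o : Option {i' : τ // i' ≠ i} => o.elim i Subtype.val) := by
      rintro (_ | o1) (_ | o2) h
      · rfl
      · exact absurd h.symm o2.2
      · exact absurd h o1.2
      · exact congrArg some (Subtype.ext h)
    have hyind : AlgebraicIndependent k y :=
      ht.comp (fun o : Option {i' : τ // i' ≠ i} => o.elim i Subtype.val) hyinj
    set P : MvPolynomial (Option {i' : τ // i' ≠ i}) k :=
      ∑ j : Fin d, MvPolynomial.X none ^ (j : ℕ) * MvPolynomial.rename Option.some (r j) with hP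
    have hPeval : MvPolynomial.aeval y P = 0 := by
      rw [hP, map_sum]
      have h2 : ∀ j : Fin d, MvPolynomial.aeval y
          (MvPolynomial.X none ^ (j : ℕ) * MvPolynomial.rename Option.some (r j))
          = t i ^ (j : ℕ) * (θ (algebraMap A F (b : A)) * θ (c j)) := by
        intro j
        rw [map_mul, map_pow, MvPolynomial.aeval_X, MvPolynomial.aeval_rename]
        have hyx : y ∘ Option.some = x := rfl
        rw [hyx]
        have h6 : (MvPolynomial.aeval x) (r j) = θ (algebraMap A F (r j)) := (hθa _).symm
        rw [h6, hr j, Algebra.smul_def, map_mul]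
        rfl
      rw [Finset.sum_congr rfl fun j _ => h2 j]
      have h7 : ∑ j : Fin d, t i ^ (j : ℕ) * (θ (algebraMap A F (b : A)) * θ (c j))
          = θ (algebraMap A F (b : A)) * ∑ j : Fin d, t i ^ (j : ℕ) * θ (c j) := by
        rw [Finset.mul_sum]
        exact Finset.sum_congr rfl fun j _ => by ring
      rw [h7, hval0, mul_zero]
    have hP0 : P = 0 := by
      have h8 := algebraicIndependent_iff_injective_aeval.mp hyind
      apply h8
      rw [hPeval, map_zero]
    have hren : ∀ q : A, MvPolynomial.optionEquivLeft k {i' : τ // i' ≠ i}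
        (MvPolynomial.rename Option.some q) = Polynomial.C q := by
      intro q
      induction q using MvPolynomial.induction_on with
      | C a => rw [MvPolynomial.rename_C, MvPolynomial.optionEquivLeft_C]
      | add p q hp hq => rw [map_add, map_add, hp, hq, map_add]
      | mul_X p n hp =>
          rw [map_mul, MvPolynomial.rename_X, map_mul, hp, MvPolynomial.optionEquivLeft_X_some,
            ← Polynomial.C_mul]
    have hr0 : ∀ j : Fin d, r j = 0 := by
      intro j
      have h1 := congrArg (MvPolynomial.optionEquivLeft k {i' : τ // i' ≠ i}) hP0
      rw [map_zero, hP, map_sum] at h1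
      have h2 : ∀ jj : Fin d, (MvPolynomial.optionEquivLeft k {i' : τ // i' ≠ i})
          (MvPolynomial.X none ^ (jj : ℕ) * MvPolynomial.rename Option.some (r jj))
          = Polynomial.C (r jj) * Polynomial.X ^ (jj : ℕ) := by
        intro jj
        rw [map_mul, map_pow, MvPolynomial.optionEquivLeft_X_none, hren, mul_comm]
      rw [Finset.sum_congr rfl fun jj _ => h2 jj] at h1
      have h3 := congrArg (fun q : Polynomial A => q.coeff (j : ℕ)) h1
      simp only [Polynomial.finset_sum_coeff, Polynomial.coeff_C_mul, Polynomial.coeff_X_pow,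
        Polynomial.coeff_zero] at h3
      rw [Finset.sum_eq_single j (fun jj _ hne => by
        have hvne : ¬((j : ℕ) = (jj : ℕ)) := fun hh => hne (Fin.val_injective hh).symm
        simp [hvne]) (by simp)] at h3
      simpa using h3
    have h9 : algebraMap A F (r j₀) = 0 := by rw [hr0 j₀, map_zero]
    rw [hr j₀, Algebra.smul_def] at h9
    have hbne : algebraMap A F (b : A) ≠ 0 := fun h =>
      nonZeroDivisors.coe_ne_zero b (IsFractionRing.injective A F (by rw [h, map_zero]))
    rcases mul_eq_zero.mp h9 with h | h
    · exact hbne h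
    · exact hj₀ h
  intro p
  cases p with
  | inr i => exact hA i
  | inl j =>
    rw [Fintype.sum_sum_type] at hg
    simp only [hA, zero_smul, Finset.sum_const_zero, add_zero] at hg
    have hbcu : LinearIndependent K (fun jj l => algebraMap k K (u jj l)) :=
      hill_bc (k := k) (K := K) hu
    exact Fintype.linearIndependent_iff.mp hbcu _ hg j

end HillHelpers

/-- Hill's general position lemma (Lemma 3.1 of the paper / Lemma 1 of Hill):
given algebraically independent `t₁, …, t_d` in a field extension `K/k`, a `d`-dimensional
`k`-vector space `V`, bases `v⁽¹⁾, …, v⁽ᵈ⁾` of `V` and a nonzero `v ∈ V`, the `d+1` vectors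
`v, b(v⁽¹⁾,t₁), …, b(v⁽ᵈ⁾,t_d)` of `K ⊗[k] V` (where `b(v̲,a) = ∑ⱼ a^(j-1) vⱼ`) are in
general position: any at most `d` of them are linearly independent over `K`. -/
theorem stmt0 (k K : Type*) [Field k] [Field K] [Algebra k K]
    (d : ℕ) (V : Type*) [AddCommGroup V] [Module k V]
    (t : Fin d → K) (ht : AlgebraicIndependent k t)
    (vB : Fin d → Module.Basis (Fin d) k V) (v : V) (hv : v ≠ 0)
    (W : Fin (d + 1) → K ⊗[k] V)
    (hW : W = Fin.cases ((1 : K) ⊗ₜ[k] v)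
      (fun i => ∑ j : Fin d, (t i) ^ (j : ℕ) • ((1 : K) ⊗ₜ[k] (vB i) j))) :
    ∀ s : Finset (Fin (d + 1)), s.card ≤ d →
      LinearIndependent K (fun i : s => W i) := by
  classical
  intro s hs
  rcases Nat.eq_zero_or_pos d with hd | hd
  · have hs0 : s = ∅ := Finset.card_eq_zero.mp (le_antisymm (hd ▸ hs) (Nat.zero_le _))
    haveI : IsEmpty ↥s := Finset.isEmpty_coe_sort.2 hs0
    exact linearIndependent_empty_type
  · have hW0 : W 0 = (1 : K) ⊗ₜ[k] v := by rw [hW]; exact Fin.cases_zero ..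
    have hWs : ∀ i : Fin d, W i.succ
        = ∑ j : Fin d, (t i) ^ (j : ℕ) • ((1 : K) ⊗ₜ[k] (vB i) j) := by
      intro i; rw [hW]; exact Fin.cases_succ ..
    obtain ⟨m, hm⟩ : ∃ m : Fin (d+1), m ∉ s := by
      by_contra hall
      push_neg at hall
      have huniv : s = Finset.univ := Finset.eq_univ_iff_forall.mpr hall
      rw [huniv, Finset.card_univ, Fintype.card_fin] at hs
      omega
    set e : Module.Basis (Fin d) k V := vB ⟨0, hd⟩ with he
    set E : (K ⊗[k] V) ≃ₗ[K] (Fin d → K) :=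
      (e.baseChange K).repr ≪≫ₗ Finsupp.linearEquivFunOnFinite K K (Fin d) with hE
    have hE0 : ∀ l, E (W 0) l = algebraMap k K (e.repr v l) := by
      intro l
      rw [hW0]
      simp [hE, Module.Basis.baseChange_repr_tmul, Algebra.algebraMap_eq_smul_one]
    have hEs : ∀ (i : Fin d) l, E (W i.succ)
        l = ∑ j : Fin d, t i ^ (j : ℕ) * algebraMap k K (e.repr (vB i j) l) := by
      intro i l
      rw [hWs i, map_sum, Finset.sum_apply]
      refine Finset.sum_congr rfl fun j _ => ?_
      rw [map_smul]
      simp [hE, Module.Basis.baseChange_repr_tmul, Algebra.algebraMap_eq_smul_one, smul_eq_mul]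
    have hbig : LinearIndependent K (fun j : Fin d => W (m.succAbove j)) := by
      set p : Fin d → Prop := fun j => m.succAbove j = 0 with hp
      set q : {j : Fin d // ¬ p j} → Fin d := fun jj => (m.succAbove jj.1).pred jj.2 with hq
      have hqinj : Function.Injective q := by
        intro a b h
        apply Subtype.ext
        apply Fin.succAbove_right_injective (p := m)
        have h2 := congrArg Fin.succ h
        rwa [hq, Fin.succ_pred, Fin.succ_pred] at h2
      have ht' : AlgebraicIndependent k (t ∘ q) := ht.comp q hqinj
      have hu' : LinearIndependent k (fun _ : {j : Fin d // p j} => fun l => e.repr v l) := by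
        haveI : Subsingleton {j : Fin d // p j} :=
          ⟨fun a b => Subtype.ext (Fin.succAbove_right_injective (a.2.trans b.2.symm))⟩
        rcases isEmpty_or_nonempty {j : Fin d // p j} with hEm | hNE
        · exact linearIndependent_empty_type
        · haveI : Inhabited {j : Fin d // p j} := Classical.inhabited_of_nonempty hNE
          haveI : Unique {j : Fin d // p j} := Unique.mk' _
          refine linearIndependent_unique_iff.mpr (fun h0 => hv ?_)
          apply e.repr.injective
          rw [map_zero]
          ext l
          exact congrFun h0 l
      have hM' : ∀ jj : {j : Fin d // ¬ p j},
          LinearIndependent k (fun j l => e.repr (vB (q jj) j) l) := by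
        intro jj
        have h1 : LinearIndependent k (vB (q jj)) := (vB (q jj)).linearIndependent
        have h2 := h1.map' (e.repr ≪≫ₗ Finsupp.linearEquivFunOnFinite k k (Fin d)).toLinearMap
          (LinearEquiv.ker _)
        exact h2
      have hcard' : Fintype.card {j : Fin d // p j} + Fintype.card {j : Fin d // ¬ p j} ≤ d := by
        rw [← Fintype.card_sum, Fintype.card_congr (Equiv.sumCompl p)]
        simp
      have hk := hill_key (k := k) (K := K) hcard' ht' hu' hM'
      have hcomp := hk.comp (Equiv.sumCompl p).symm (Equiv.injective _)
      apply LinearIndependent.of_comp E.toLinearMap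
      have heq : (⇑E.toLinearMap ∘ fun j : Fin d => W (m.succAbove j))
          = (Sum.elim (fun _ : {j // p j} => fun l => algebraMap k K (e.repr v l))
              (fun jj : {j // ¬ p j} => fun l => ∑ j : Fin d,
                (t ∘ q) jj ^ (j : ℕ) * algebraMap k K (e.repr (vB (q jj) j) l)))
            ∘ ⇑(Equiv.sumCompl p).symm := by
        funext j
        by_cases hj : p j
        · rw [Function.comp_apply, Function.comp_apply, Equiv.sumCompl_symm_apply_of_pos hj]
          have h3 : m.succAbove j = 0 := hj
          rw [h3]
          funext l
          exact hE0 l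
        · rw [Function.comp_apply, Function.comp_apply, Equiv.sumCompl_symm_apply_of_neg hj]
          have h5 : m.succAbove j = (q ⟨j, hj⟩).succ := (Fin.succ_pred _ _).symm
          rw [h5]
          funext l
          exact hEs _ l
      rw [heq]
      exact hcomp
    have hρ : ∀ i : ↥s, ∃ j : Fin d, m.succAbove j = ↑i := by
      intro i
      exact Fin.exists_succAbove_eq (fun h => hm (h ▸ i.2))
    choose ρ hρeq using hρ
    have hρinj : Function.Injective ρ := by
      intro i1 i2 h
      apply Subtype.ext
      rw [← hρeq i1, ← hρeq i2, h]
    have heq2 : (fun i : ↥s => W ↑i) = (fun j : Fin d => W (m.succAbove j)) ∘ ρ := by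
      funext i
      rw [Function.comp_apply, hρeq i]
    rw [heq2]
    exact hbig.comp ρ hρinj
end

section
/- Let $k$ be an ordered field, $V$ a $d$-dimensional $k$-vector space with determinant form $\omega$, and let $K/k$ be an extension of ordered fields carrying a valuation $w$ with value group $\mathbb{Z}^{d+1}$ (lexicographic), residue field $k$, valuation ring $\mathcal{O}_w$, and parameters $t_1,\ldots,t_d$ as above. Fix a basis $\underline{v}=(v_1,\ldots,v_d)$ of $V$ and set $b(\underline{v},a)=\sum_{i=1}^d a^{i-1}v_i$. Let $g_1,\ldots,g_d \in \mathrm{GL}(V)$ be such that $b_1=g_1(v_1),\ldots,b_d=g_d(v_1)$ form a basis of $V$, and let $v \in V \setminus\{0\}$ have coordinates $\lambda_1,\ldots,\lambda_d \in K$ with respect to the $K$-basis $(g_1(b(\underline{v},t_1)),\ldots,g_d(b(\underline{v},t_d)))$ of $V_K$. Then all $\lambda_i$ lie in $\mathcal{O}_w$, and the residues $\bar\lambda_1,\ldots,\bar\lambda_d \in k$ are precisely the coordinates of $v$ with respect to the basis $(b_1,\ldots,b_d)$ of $V$. -/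
open TensorProduct

lemma exists_dominant {K : Type*} [Field K] (O : Subring K)
    (hval : ∀ x : K, x ∈ O ∨ x⁻¹ ∈ O) {ι : Type*} [DecidableEq ι] (s : Finset ι) (f : ι → K)
    (hs : s.Nonempty) (hf : ∀ i ∈ s, f i ≠ 0) :
    ∃ m ∈ s, ∀ i ∈ s, f i / f m ∈ O := by
  induction s using Finset.induction with
  | empty => simp at hs
  | @insert a s ha ih =>
    rcases s.eq_empty_or_nonempty with rfl | hne
    · refine ⟨a, Finset.mem_insert_self _ _, ?_⟩
      intro i hi
      simp only [Finset.mem_insert, Finset.notMem_empty, or_false] at hi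
      rw [hi, div_self (hf a (Finset.mem_insert_self _ _))]
      exact O.one_mem
    · obtain ⟨m, hm, hdom⟩ := ih hne (fun i hi => hf i (Finset.mem_insert_of_mem hi))
      rcases hval (f a / f m) with h | h
      · refine ⟨m, Finset.mem_insert_of_mem hm, ?_⟩
        intro i hi
        rcases Finset.mem_insert.mp hi with rfl | hi
        · exact h
        · exact hdom i hi
      · rw [inv_div] at h
        refine ⟨a, Finset.mem_insert_self _ _, ?_⟩
        intro i hi
        rcases Finset.mem_insert.mp hi with rfl | hi
        · rw [div_self (hf i (Finset.mem_insert_self _ _))]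
          exact O.one_mem
        · have hmne : f m ≠ 0 := hf m (Finset.mem_insert_of_mem hm)
          have : f i / f m * (f m / f a) = f i / f a := div_mul_div_cancel₀ hmne
          rw [← this]
          exact O.mul_mem (hdom i hi) h

/-- Key step of Lemma 3.6 of the paper: let `K/k` be a field extension, `O ⊆ K` a valuation
ring containing `k`, with residue map `ρ : K → k` (a retraction of `k ⊆ O ⊆ K`), and let
`t₁,…,t_d ∈ K` lie in the maximal ideal of `O`.  Let `V` be a `d`-dimensional `k`-vector
space with basis `v₁,…,v_d`, let `g₁,…,g_d` be automorphisms of `V` such that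
`b₁ = g₁(v₁),…,b_d = g_d(v₁)` are linearly independent, and let `v ∈ V` be nonzero with
coordinates `λ₁,…,λ_d ∈ K` with respect to the vectors `g_i(b(v̲,t_i)) ∈ K ⊗[k] V`.
Then all `λᵢ` lie in `O`, and their residues are the coordinates of `v` with respect to
`(b₁,…,b_d)`. -/
theorem stmt4 (k K : Type*) [Field k] [Field K] [Algebra k K]
    (O : Subring K)
    (halg : ∀ c : k, algebraMap k K c ∈ O)
    (hval : ∀ x : K, x ∈ O ∨ x⁻¹ ∈ O)
    (ρ : K → k)
    (hρadd : ∀ x y : K, x ∈ O → y ∈ O → ρ (x + y) = ρ x + ρ y)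
    (hρmul : ∀ x y : K, x ∈ O → y ∈ O → ρ (x * y) = ρ x * ρ y)
    (hρalg : ∀ c : k, ρ (algebraMap k K c) = c)
    (hunit : ∀ x : K, x ∈ O → ρ x ≠ 0 → x ≠ 0 ∧ x⁻¹ ∈ O)
    (d : ℕ) (hd : 0 < d)
    (V : Type*) [AddCommGroup V] [Module k V]
    (vB : Module.Basis (Fin d) k V)
    (g : Fin d → (V ≃ₗ[k] V))
    (t : Fin d → K)
    (ht : ∀ i, t i ∈ O ∧ ρ (t i) = 0)
    (hb : LinearIndependent k (fun i : Fin d => g i (vB ⟨0, hd⟩)))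
    (v : V) (hv : v ≠ 0)
    (lam : Fin d → K)
    (hlam : (1 : K) ⊗ₜ[k] v =
      ∑ i : Fin d, lam i • (∑ j : Fin d, (t i) ^ (j : ℕ) • ((1 : K) ⊗ₜ[k] (g i (vB j))))) :
    (∀ i, lam i ∈ O) ∧ v = ∑ i : Fin d, ρ (lam i) • g i (vB ⟨0, hd⟩) := by
  classical
  haveI : FiniteDimensional k V := Module.Finite.of_basis vB
  haveI : Nonempty (Fin d) := ⟨⟨0, hd⟩⟩
  set z0 : Fin d := ⟨0, hd⟩ with hz0
  -- basic facts about ρ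
  have hρ1 : ρ 1 = 1 := by simpa using hρalg 1
  have hρ0 : ρ 0 = 0 := by simpa using hρalg 0
  have hρsum : ∀ (f : Fin d → K), (∀ i, f i ∈ O) →
      ρ (∑ i, f i) = ∑ i, ρ (f i) := by
    intro f hf
    classical
    have : ∀ s : Finset (Fin d), ρ (∑ i ∈ s, f i) = ∑ i ∈ s, ρ (f i) := by
      intro s
      induction s using Finset.induction with
      | empty => simpa using hρ0
      | @insert a s ha ih =>
        rw [Finset.sum_insert ha, Finset.sum_insert ha,
          hρadd _ _ (hf a) (O.sum_mem fun i _ => hf i), ih]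
    exact this Finset.univ
  have hρpow : ∀ (x : K) (n : ℕ), x ∈ O → ρ (x ^ n) = (ρ x) ^ n := by
    intro x n hx
    induction n with
    | zero => simpa using hρ1
    | succ n ih => rw [pow_succ, pow_succ, hρmul _ _ (O.pow_mem hx n) hx, ih]
  -- the basis b
  have cardeq : Fintype.card (Fin d) = Module.finrank k V := by
    rw [Module.finrank_eq_card_basis vB]
  set bB : Module.Basis (Fin d) k V := basisOfLinearIndependentOfCardEqFinrank hb cardeq with hbBdef
  have hbB : ∀ i, bB i = g i (vB z0) := by
    intro i
    rw [hbBdef]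
    exact congrFun (coe_basisOfLinearIndependentOfCardEqFinrank hb cardeq) i
  set μ : Fin d → k := fun l => bB.repr v l with hμ
  set A : Fin d → Fin d → K :=
    fun i l => ∑ j : Fin d, t i ^ (j : ℕ) * algebraMap k K (bB.repr (g i (vB j)) l) with hA
  -- the key scalar equations
  have key : ∀ l, algebraMap k K (μ l) = ∑ i, lam i * A i l := by
    intro l
    have h := congrArg (fun z => ((bB.baseChange K).repr z) l) hlam
    simp only [map_sum, map_smul, Finsupp.coe_finset_sum, Finset.sum_apply, Finsupp.smul_apply,
      Module.Basis.baseChange_repr_tmul, smul_eq_mul, Algebra.smul_def, mul_one] at h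
    rw [hA]
    simpa [Finset.mul_sum] using h
  -- membership and residue of A
  have hAO : ∀ i l, A i l ∈ O := by
    intro i l
    exact O.sum_mem fun j _ => O.mul_mem (O.pow_mem (ht i).1 _) (halg _)
  have hρA : ∀ i l, ρ (A i l) = if i = l then 1 else 0 := by
    intro i l
    rw [hA]
    rw [hρsum _ (fun j => O.mul_mem (O.pow_mem (ht i).1 _) (halg _))]
    have : ∀ j : Fin d, ρ (t i ^ (j : ℕ) * algebraMap k K (bB.repr (g i (vB j)) l))
        = (0 : k) ^ (j : ℕ) * bB.repr (g i (vB j)) l := by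
      intro j
      rw [hρmul _ _ (O.pow_mem (ht i).1 _) (halg _), hρpow _ _ (ht i).1, (ht i).2, hρalg]
    rw [Finset.sum_congr rfl fun j _ => this j]
    rw [Finset.sum_eq_single z0]
    · have : g i (vB z0) = bB i := (hbB i).symm
      rw [this, Module.Basis.repr_self]
      simp [Finsupp.single_apply, z0]
    · intro j _ hj
      have : (j : ℕ) ≠ 0 := by
        intro h0
        exact hj (Fin.ext h0)
      rw [zero_pow this, zero_mul]
    · intro h
      exact absurd (Finset.mem_univ z0) h
  -- case where all lam vanish is impossible
  have hex : ∃ i, lam i ≠ 0 := by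
    by_contra h
    push_neg at h
    have hμ0 : ∀ l, μ l = 0 := by
      intro l
      have := key l
      simp only [h, zero_mul, Finset.sum_const_zero] at this
      exact (algebraMap k K).injective (by simpa using this)
    apply hv
    have := bB.sum_repr v
    rw [← this]
    simp only [← hμ]
    simp [hμ0]
  -- choose dominant index
  obtain ⟨i0, hi0⟩ := hex
  set s : Finset (Fin d) := Finset.univ.filter (fun i => lam i ≠ 0) with hs
  have hsne : s.Nonempty := ⟨i0, by simp [hs, hi0]⟩
  obtain ⟨m, hms, hdom'⟩ := exists_dominant O hval s lam hsne (fun i hi => by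
    simp only [hs, Finset.mem_filter] at hi; exact hi.2)
  have hmne : lam m ≠ 0 := by
    simp only [hs, Finset.mem_filter] at hms; exact hms.2
  have hdom : ∀ i, lam i / lam m ∈ O := by
    intro i
    by_cases h : lam i = 0
    · rw [h, zero_div]; exact O.zero_mem
    · exact hdom' i (by simp [hs, h])
  -- the unit u
  set u : K := ∑ i, (lam i / lam m) * A i m with hu
  have huO : u ∈ O := O.sum_mem fun i _ => O.mul_mem (hdom i) (hAO i m)
  have hkeym : algebraMap k K (μ m) = lam m * u := by
    rw [key m, hu, Finset.mul_sum]
    refine Finset.sum_congr rfl fun i _ => ?_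
    field_simp
  have hρu : ρ u = 1 := by
    rw [hu, hρsum _ (fun i => O.mul_mem (hdom i) (hAO i m))]
    rw [Finset.sum_eq_single m]
    · rw [hρmul _ _ (hdom m) (hAO m m), hρA]
      rw [div_self hmne, hρ1]
      simp
    · intro i _ hi
      rw [hρmul _ _ (hdom i) (hAO i m), hρA]
      simp [hi]
    · intro h
      exact absurd (Finset.mem_univ m) h
  obtain ⟨hune, huinv⟩ := hunit u huO (by rw [hρu]; exact one_ne_zero)
  have hlamm : lam m = algebraMap k K (μ m) * u⁻¹ := by
    rw [hkeym]
    field_simp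
  have hlammO : lam m ∈ O := by
    rw [hlamm]
    exact O.mul_mem (halg _) huinv
  have hlamO : ∀ i, lam i ∈ O := by
    intro i
    have : lam i = (lam i / lam m) * lam m := by field_simp
    rw [this]
    exact O.mul_mem (hdom i) hlammO
  refine ⟨hlamO, ?_⟩
  -- residues
  have hres : ∀ l, ρ (lam l) = μ l := by
    intro l
    have h := key l
    have : ρ (algebraMap k K (μ l)) = ρ (∑ i, lam i * A i l) := by rw [h]
    rw [hρalg, hρsum _ (fun i => O.mul_mem (hlamO i) (hAO i l))] at this
    rw [this, Finset.sum_eq_single l]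
    · rw [hρmul _ _ (hlamO l) (hAO l l), hρA]
      simp
    · intro i _ hi
      rw [hρmul _ _ (hlamO i) (hAO i l), hρA]
      simp [hi]
    · intro h
      exact absurd (Finset.mem_univ l) h
  have := bB.sum_repr v
  rw [← this]
  refine Finset.sum_congr rfl fun l _ => ?_
  rw [hres l, hbB l]
end

section
/- With the notation of the previous statement (so $b_1=g_1(v_1),\ldots,b_d=g_d(v_1)$ a basis of $V$, and $\tilde b_i = g_i(b(\underline{v},t_i))$): (1) $\mathrm{sign}(\omega(b_1,\ldots,b_d)) = \mathrm{sign}(\omega(\tilde b_1,\ldots,\tilde b_d))$, where $\omega$ is extended $K$-multilinearly and signs are taken in the ordered field $K$; and (2) the open cone $C(b_1,\ldots,b_d) = \{\sum \lambda_i b_i : \lambda_i \in k, \lambda_i > 0\}$ is contained in $C(\tilde b_1,\ldots,\tilde b_d) \cap V$ (positive $K$-coefficients), which in turn is contained in the closed cone $C[b_1,\ldots,b_d] = \{\sum \lambda_i b_i : \lambda_i \in k, \lambda_i \ge 0\} \setminus \{0\}$. -/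
open TensorProduct
open Matrix

/-- Lemma 3.6 of the paper: in the setting of the valuation-theoretic ordered extension
`K/k` (with valuation ring `O`, residue map `ρ`, order on `K` determined by residues),
if `b₁ = g₁(v₁),…,b_d = g_d(v₁)` is a basis of `V` and `b̃ᵢ = gᵢ(b(v̲,tᵢ)) ∈ K ⊗[k] V`,
then the sign of `ω(b₁,…,b_d)` equals the sign of `ω_K(b̃₁,…,b̃_d)`, and
`C(b₁,…,b_d) ⊆ C(b̃₁,…,b̃_d) ∩ V ⊆ C[b₁,…,b_d]`. -/
theorem stmt5 (k K : Type*) [Field k] [LinearOrder k] [IsStrictOrderedRing k]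
    [Field K] [LinearOrder K] [IsStrictOrderedRing K] [Algebra k K]
    (halgpos : ∀ c : k, 0 < c → 0 < algebraMap k K c)
    (O : Subring K)
    (halg : ∀ c : k, algebraMap k K c ∈ O)
    (hval : ∀ x : K, x ∈ O ∨ x⁻¹ ∈ O)
    (ρ : K → k)
    (hρadd : ∀ x y : K, x ∈ O → y ∈ O → ρ (x + y) = ρ x + ρ y)
    (hρmul : ∀ x y : K, x ∈ O → y ∈ O → ρ (x * y) = ρ x * ρ y)
    (hρalg : ∀ c : k, ρ (algebraMap k K c) = c)
    (hunit : ∀ x : K, x ∈ O → ρ x ≠ 0 → x ≠ 0 ∧ x⁻¹ ∈ O)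
    -- the ordering of `K` is the one induced by the valuation and the ordering of the
    -- residue field `k`:
    (horder : ∀ x : K, x ∈ O → ρ x ≠ 0 → (0 < x ↔ 0 < ρ x))
    (d : ℕ) (hd : 0 < d)
    (V : Type*) [AddCommGroup V] [Module k V]
    (vB : Module.Basis (Fin d) k V)
    (g : Fin d → (V ≃ₗ[k] V))
    (t : Fin d → K)
    (ht : ∀ i, t i ∈ O ∧ ρ (t i) = 0)
    (hb : LinearIndependent k (fun i : Fin d => g i (vB ⟨0, hd⟩)))
    -- the determinant form `ω` on `V` and its `K`-multilinear extension `ωK`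
    (ω : AlternatingMap k V k (Fin d)) (hω : ω ≠ 0)
    (ωK : AlternatingMap K (K ⊗[k] V) K (Fin d))
    (hcompat : ∀ u : Fin d → V, ωK (fun i => (1 : K) ⊗ₜ[k] u i) = algebraMap k K (ω u))
    -- the vectors b̃ᵢ = gᵢ(b(v̲,tᵢ))
    (W : Fin d → K ⊗[k] V)
    (hWdef : W = fun i => ∑ j : Fin d, (t i) ^ (j : ℕ) • ((1 : K) ⊗ₜ[k] (g i (vB j))))
    -- the b̃ᵢ form a K-basis of K ⊗[k] V (general position, Lemma 3.1)
    (B : Module.Basis (Fin d) K (K ⊗[k] V)) (hB : ∀ i, B i = W i) :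
    ((0 < ωK W ↔ 0 < ω (fun i => g i (vB ⟨0, hd⟩))) ∧
      (ωK W < 0 ↔ ω (fun i => g i (vB ⟨0, hd⟩)) < 0)) ∧
    (∀ u : V, (∃ c : Fin d → k, (∀ i, 0 < c i) ∧ u = ∑ i, c i • g i (vB ⟨0, hd⟩)) →
      ∃ μ : Fin d → K, (∀ i, 0 < μ i) ∧ (1 : K) ⊗ₜ[k] u = ∑ i, μ i • W i) ∧
    (∀ u : V, (∃ μ : Fin d → K, (∀ i, 0 < μ i) ∧ (1 : K) ⊗ₜ[k] u = ∑ i, μ i • W i) →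
      u ≠ 0 ∧ ∃ c : Fin d → k, (∀ i, 0 ≤ c i) ∧ u = ∑ i, c i • g i (vB ⟨0, hd⟩)) := by
  classical
  haveI : Nonempty (Fin d) := ⟨⟨0, hd⟩⟩
  set z : Fin d := ⟨0, hd⟩ with hz
  -- the residue ring hom on O
  let ρ' : O →+* k :=
  { toFun := fun x => ρ x
    map_one' := by have := hρalg 1; simpa using this
    map_mul' := fun x y => hρmul x y x.2 y.2
    map_zero' := by have := hρalg 0; simpa using this
    map_add' := fun x y => hρadd x y x.2 y.2 }
  -- the basis b of V
  have hcard : Fintype.card (Fin d) = Module.finrank k V := by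
    simp [Module.finrank_eq_card_basis vB]
  let bV : Module.Basis (Fin d) k V := basisOfLinearIndependentOfCardEqFinrank hb hcard
  have hbV : ∀ i, bV i = g i (vB z) := fun i =>
    congrFun (coe_basisOfLinearIndependentOfCardEqFinrank hb hcard) i
  -- coefficients
  let a : Fin d → Fin d → Fin d → k := fun i j l => bV.repr (g i (vB j)) l
  have hga : ∀ i j, g i (vB j) = ∑ l, a i j l • bV l := fun i j => (bV.sum_repr _).symm
  have ha0 : ∀ i l, a i z l = if i = l then 1 else 0 := by
    intro i l
    have h1 : g i (vB z) = bV i := (hbV i).symm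
    simp [a, h1, Module.Basis.repr_self, Finsupp.single_apply]
  -- the matrix N' over O
  let tO : Fin d → O := fun i => ⟨t i, (ht i).1⟩
  let algO : k → O := fun c => ⟨algebraMap k K c, halg c⟩
  have hρt : ∀ i, ρ' (tO i) = 0 := fun i => (ht i).2
  have hρa : ∀ c, ρ' (algO c) = c := fun c => hρalg c
  let N' : Matrix (Fin d) (Fin d) O := fun i l => ∑ j : Fin d, tO i ^ (j : ℕ) * algO (a i j l)
  have hρN : N'.map ρ' = 1 := by
    ext i l
    have h1 : ρ' (N' i l) = ∑ j : Fin d, (0 : k) ^ (j : ℕ) * a i j l := by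
      simp only [N', map_sum, _root_.map_mul, _root_.map_pow, hρt, hρa]
    rw [Matrix.map_apply, h1, Finset.sum_eq_single z]
    · rw [show ((z : Fin d) : ℕ) = 0 from rfl, pow_zero, one_mul, ha0, Matrix.one_apply]
    · intro j _ hj
      have hj0 : (j : ℕ) ≠ 0 := by
        simpa [hz, Fin.ext_iff] using hj
      rw [zero_pow hj0, zero_mul]
    · intro h; exact absurd (Finset.mem_univ z) h
  have hρdet : ρ' N'.det = 1 := by
    rw [RingHom.map_det, RingHom.mapMatrix_apply, hρN, Matrix.det_one]
  have hdet : ((N'.det : K)) ≠ 0 ∧ ((N'.det : K))⁻¹ ∈ O := by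
    refine hunit _ N'.det.2 ?_
    rw [show ρ (N'.det : K) = ρ' N'.det from rfl, hρdet]
    exact one_ne_zero
  have hdetU : IsUnit N'.det := by
    refine isUnit_iff_exists_inv.mpr ⟨⟨((N'.det : K))⁻¹, hdet.2⟩, ?_⟩
    exact Subtype.ext (by simpa using mul_inv_cancel₀ hdet.1)
  haveI : Invertible N' := N'.invertibleOfIsUnitDet hdetU
  let M' : Matrix (Fin d) (Fin d) O := ⅟N'
  have hNM : N' * M' = 1 := mul_invOf_self N'
  have hMN : M' * N' = 1 := invOf_mul_self N'
  have hρM : M'.map ρ' = 1 := by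
    have h1 : (M' * N').map ρ' = (1 : Matrix (Fin d) (Fin d) O).map ρ' := by rw [hMN]
    rw [Matrix.map_mul (f := ρ'), hρN, Matrix.mul_one,
      Matrix.map_one ρ' (map_zero ρ') (map_one ρ')] at h1
    exact h1
  -- K-level matrices
  let ι : O →+* K := O.subtype
  let NK : Matrix (Fin d) (Fin d) K := N'.map ι
  let MK : Matrix (Fin d) (Fin d) K := M'.map ι
  have hNMK : NK * MK = 1 := by
    rw [show NK * MK = (N' * M').map ι from (Matrix.map_mul (f := ι)).symm, hNM,
      Matrix.map_one ι (map_zero ι) (map_one ι)]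
  have hMNK : MK * NK = 1 := by
    rw [show MK * NK = (M' * N').map ι from (Matrix.map_mul (f := ι)).symm, hMN,
      Matrix.map_one ι (map_zero ι) (map_one ι)]
  -- the base-changed basis
  let bK : Module.Basis (Fin d) K (K ⊗[k] V) := bV.baseChange K
  have hbK : ∀ l, bK l = (1 : K) ⊗ₜ[k] bV l := fun l => by simp [bK]
  have htmul : ∀ (c : k) (x : V),
      (1 : K) ⊗ₜ[k] (c • x) = algebraMap k K c • ((1 : K) ⊗ₜ[k] x) := by
    intro c x
    rw [TensorProduct.tmul_smul, ← algebraMap_smul K c ((1:K) ⊗ₜ[k] x)]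
  have hN'coe : ∀ i l, ((N' i l : K)) = ∑ j : Fin d, (t i) ^ (j : ℕ) * algebraMap k K (a i j l) := by
    intro i l
    simp [N', tO, algO]
  have hW : ∀ i, W i = ∑ l, ((N' i l : K)) • bK l := by
    intro i
    rw [hWdef]
    simp only [hN'coe, Finset.sum_smul]
    rw [Finset.sum_comm]
    refine Finset.sum_congr rfl fun j _ => ?_
    rw [hga i j, TensorProduct.tmul_sum, Finset.smul_sum]
    refine Finset.sum_congr rfl fun l _ => ?_
    rw [htmul, hbK, smul_smul]
  have hcomb : ∀ μ : Fin d → K, ∑ i, μ i • W i = ∑ l, (μ ᵥ* NK) l • bK l := by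
    intro μ
    simp only [hW, Finset.smul_sum, smul_smul]
    rw [Finset.sum_comm]
    refine Finset.sum_congr rfl fun l _ => ?_
    rw [← Finset.sum_smul]
    congr 1
  have hu1 : ∀ u : V, (1 : K) ⊗ₜ[k] u = ∑ l, algebraMap k K (bV.repr u l) • bK l := by
    intro u
    conv_lhs => rw [← bV.sum_repr u]
    rw [TensorProduct.tmul_sum]
    exact Finset.sum_congr rfl fun l _ => by rw [htmul, hbK]
  have huniq : ∀ x y : Fin d → K, ∑ l, x l • bK l = ∑ l, y l • bK l → x = y := by
    intro x y h
    have hx := bK.repr_sum_self x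
    have hy := bK.repr_sum_self y
    rw [h, hy] at hx
    exact hx.symm
  -- the main coordinate equivalence
  have hmain : ∀ (u : V) (μ : Fin d → K),
      (1 : K) ⊗ₜ[k] u = ∑ i, μ i • W i ↔
        μ ᵥ* NK = fun l => algebraMap k K (bV.repr u l) := by
    intro u μ
    rw [hcomb, hu1]
    constructor
    · intro h
      exact (huniq _ _ h.symm)
    · intro h
      rw [h]
  have hsolve : ∀ (u : V) (μ : Fin d → K),
      (1 : K) ⊗ₜ[k] u = ∑ i, μ i • W i ↔
        μ = (fun l => algebraMap k K (bV.repr u l)) ᵥ* MK := by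
    intro u μ
    rw [hmain]
    constructor
    · intro h
      rw [← h, Matrix.vecMul_vecMul, hNMK, Matrix.vecMul_one]
    · intro h
      rw [h, Matrix.vecMul_vecMul, hMNK, Matrix.vecMul_one]
  -- residues of solved coefficients
  have hvec : ∀ (cc : Fin d → k) (i : Fin d),
      ((fun l => algebraMap k K (cc l)) ᵥ* MK) i ∈ O ∧
        ρ (((fun l => algebraMap k K (cc l)) ᵥ* MK) i) = cc i := by
    intro cc i
    have hOsum : ((fun l => algebraMap k K (cc l)) ᵥ* MK) i
        = ((∑ l, algO (cc l) * M' l i : O) : K) := by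
      simp [Matrix.vecMul, dotProduct, MK, ι, algO]
    constructor
    · rw [hOsum]; exact (∑ l, algO (cc l) * M' l i : O).2
    · rw [hOsum, show ρ ((∑ l, algO (cc l) * M' l i : O) : K)
        = ρ' (∑ l, algO (cc l) * M' l i) from rfl, map_sum]
      rw [Finset.sum_eq_single i]
      · rw [_root_.map_mul, hρa]
        have : ρ' (M' i i) = 1 := by
          have := congrFun (congrFun hρM i) i
          simpa [Matrix.one_apply] using this
        rw [this, mul_one]
      · intro l _ hl
        have : ρ' (M' l i) = 0 := by
          have := congrFun (congrFun hρM l) i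
          simpa [Matrix.one_apply, hl] using this
        rw [_root_.map_mul, this, mul_zero]
      · intro h; exact absurd (Finset.mem_univ i) h
  ---- Part 1: the sign of ωK W
  have hωb0 : ω (fun i => g i (vB z)) ≠ 0 := by
    have h1 : ω bV ≠ 0 := (AlternatingMap.map_basis_ne_zero_iff bV ω).mpr hω
    have h2 : (fun i => g i (vB z)) = ⇑bV := funext fun i => (hbV i).symm
    rw [h2]
    exact h1
  let S : (Fin d → Fin d) → O := fun r =>
    (∏ i, tO i ^ ((r i : Fin d) : ℕ)) * algO (ω fun i => g i (vB (r i)))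
  have hωKW : ωK W = ((∑ r : Fin d → Fin d, S r : O) : K) := by
    rw [hWdef]
    rw [show (ωK fun i => ∑ j : Fin d, (t i) ^ (j : ℕ) • ((1 : K) ⊗ₜ[k] (g i (vB j))))
        = ∑ r : Fin d → Fin d, ωK fun i => (t i) ^ ((r i : ℕ)) • ((1 : K) ⊗ₜ[k] (g i (vB (r i))))
      from ωK.toMultilinearMap.map_sum (g := fun (i : Fin d) (j : Fin d) => (t i) ^ (j : ℕ) • ((1 : K) ⊗ₜ[k] (g i (vB j))))]
    have hOsum : ((∑ r : Fin d → Fin d, S r : O) : K) = ∑ r : Fin d → Fin d, ((S r : O) : K) := by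
      push_cast; rfl
    rw [hOsum]
    refine Finset.sum_congr rfl fun r _ => ?_
    rw [show (ωK fun i => (t i) ^ ((r i : ℕ)) • ((1 : K) ⊗ₜ[k] (g i (vB (r i)))))
        = (∏ i, (t i) ^ ((r i : ℕ))) • ωK (fun i => (1 : K) ⊗ₜ[k] (g i (vB (r i))))
      from ωK.toMultilinearMap.map_smul_univ _ _]
    rw [hcompat, smul_eq_mul]
    simp [S, tO, algO]
  have hρωK : ρ (ωK W) = ω (fun i => g i (vB z)) := by
    rw [hωKW, show ρ ((∑ r : Fin d → Fin d, S r : O) : K)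
      = ρ' (∑ r : Fin d → Fin d, S r) from rfl, map_sum]
    rw [Finset.sum_eq_single (fun _ => z)]
    · simp only [S, _root_.map_mul, map_prod, _root_.map_pow, hρt, hρa]
      rw [show ∏ i : Fin d, (0:k) ^ ((z : Fin d) : ℕ) = 1 from by
        simp [show ((z : Fin d) : ℕ) = 0 from rfl]]
      rw [one_mul]
    · intro r _ hr
      have : ∃ i, r i ≠ z := by
        by_contra hc
        push_neg at hc
        exact hr (funext hc)
      obtain ⟨i0, hi0⟩ := this
      simp only [S, _root_.map_mul, map_prod, _root_.map_pow, hρt, hρa]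
      rw [Finset.prod_eq_zero (Finset.mem_univ i0), zero_mul]
      exact zero_pow (by simpa [hz, Fin.ext_iff] using hi0)
    · intro h; exact absurd (Finset.mem_univ _) h
  have hmemωK : ωK W ∈ O := by rw [hωKW]; exact (∑ r : Fin d → Fin d, S r : O).2
  have hρne : ρ (ωK W) ≠ 0 := by rw [hρωK]; exact hωb0
  have hpos := horder (ωK W) hmemωK hρne
  have hneK : ωK W ≠ 0 := (hunit _ hmemωK hρne).1
  refine ⟨⟨by rw [hpos, hρωK], ?_⟩, ?_, ?_⟩
  · -- negative signs
    constructor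
    · intro h
      have h1 : ¬ (0 < ωK W) := asymm h
      rw [hpos, hρωK] at h1
      exact (hωb0.lt_or_gt).resolve_right h1
    · intro h
      have h1 : ¬ (0 < ωK W) := by rw [hpos, hρωK]; exact asymm h
      exact (hneK.lt_or_gt).resolve_right h1
  · -- first cone inclusion
    rintro u ⟨c, hcpos, hcu⟩
    have hrepr : ∀ l, bV.repr u l = c l := by
      intro l
      rw [hcu, show (∑ i, c i • g i (vB z)) = ∑ i, c i • bV i from
        Finset.sum_congr rfl fun i _ => by rw [hbV], bV.repr_sum_self]
    refine ⟨(fun l => algebraMap k K (c l)) ᵥ* MK, ?_, ?_⟩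
    · intro i
      obtain ⟨hm, hr⟩ := hvec c i
      have hh := horder _ hm (by rw [hr]; exact (hcpos i).ne')
      rw [hh, hr]
      exact hcpos i
    · rw [hsolve]
      have : (fun l => algebraMap k K (bV.repr u l)) = fun l => algebraMap k K (c l) :=
        funext fun l => by rw [hrepr]
      rw [this]
  · -- second cone inclusion
    rintro u ⟨μ, hμpos, hμu⟩
    have hμ := (hsolve u μ).mp hμu
    set c : Fin d → k := fun i => bV.repr u i with hc
    have hprop : ∀ i, μ i ∈ O ∧ ρ (μ i) = c i := by
      intro i
      rw [hμ]
      exact hvec c i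
    have hcnn : ∀ i, 0 ≤ c i := by
      intro i
      rcases eq_or_ne (c i) 0 with h0 | h0
      · rw [h0]
      · have hh := (horder _ (hprop i).1 (by rw [(hprop i).2]; exact h0)).mp (hμpos i)
        rw [(hprop i).2] at hh
        exact le_of_lt hh
    refine ⟨?_, c, hcnn, ?_⟩
    · intro h0
      have h1 : (fun l => algebraMap k K (bV.repr u l)) = fun _ => (0 : K) := by
        funext l
        rw [h0]
        simp
      rw [h1] at hμ
      have h2 : μ z = 0 := by
        rw [hμ]
        simp [Matrix.vecMul, dotProduct]
      exact absurd (hμpos z) (by rw [h2]; exact lt_irrefl 0)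
    · rw [show (∑ i, c i • g i (vB z)) = ∑ i, c i • bV i from
        Finset.sum_congr rfl fun i _ => by rw [hbV]]
      exact (bV.sum_repr u).symm
end
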